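/- Let v : ℝ² → ℝ² be continuously differentiable with compact support. Then the Jacobian determinant of v integrates to zero: ∫_{ℝ²} det(Dv(x)) dx = 0, where Dv(x) is the 2×2 Jacobian matrix of v at x (the determinant is a null Lagrangian). -/

import Mathlib

open Matrix MeasureTheory

open Metric Filter ContinuousLinearMap Set
open scoped Convolution Topology Pointwise

/-- The Jacobian matrix of `v : ℝ² → ℝ²`: `(Dv)_{ij} = ∂v_i/∂x_j`. -/
noncomputable def jacobian (v : (Fin 2 → ℝ) → (Fin 2 → ℝ)) (x : Fin 2 → ℝ) :
    Matrix (Fin 2) (Fin 2) ℝ :=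
  Matrix.of fun i j => fderiv ℝ v x (Pi.single j 1) i

theorem key (w : (Fin 2 → ℝ) → (Fin 2 → ℝ)) (hw : ContDiff ℝ 2 w)
    (hs : HasCompactSupport w) :
    ∫ x : Fin 2 → ℝ, (jacobian w x).det = 0 := by
  obtain ⟨R, hR0, hR⟩ : ∃ R, 0 < R ∧ tsupport w ⊆ ball 0 R := by
    obtain ⟨R, hR0, hR⟩ := hs.isCompact.isBounded.subset_ball_lt 0 0
    exact ⟨R, hR0, hR⟩
  set u0 : (Fin 2 → ℝ) → ℝ := fun x => w x 0 with hu0def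
  set u1 : (Fin 2 → ℝ) → ℝ := fun x => w x 1 with hu1def
  have hu0 : ContDiff ℝ 2 u0 :=
    (ContinuousLinearMap.proj 0 : (Fin 2 → ℝ) →L[ℝ] ℝ).contDiff.comp hw
  have hu1 : ContDiff ℝ 2 u1 :=
    (ContinuousLinearMap.proj 1 : (Fin 2 → ℝ) →L[ℝ] ℝ).contDiff.comp hw
  have hDu1 : ContDiff ℝ 1 (fderiv ℝ u1) := hu1.fderiv_right (by norm_num)
  set g0 : (Fin 2 → ℝ) → ℝ := fun x => fderiv ℝ u1 x (Pi.single 0 1) with hg0def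
  set g1 : (Fin 2 → ℝ) → ℝ := fun x => fderiv ℝ u1 x (Pi.single 1 1) with hg1def
  have hg0 : ContDiff ℝ 1 g0 := hDu1.clm_apply contDiff_const
  have hg1 : ContDiff ℝ 1 g1 := hDu1.clm_apply contDiff_const
  set f : Fin 2 → (Fin 2 → ℝ) → ℝ :=
    ![fun x => u0 x * g1 x, fun x => -(u0 x * g0 x)] with hfdef
  have hf : ∀ i, ContDiff ℝ 1 (f i) := by
    intro i
    fin_cases i
    · exact (hu0.of_le one_le_two).mul hg1
    · exact ((hu0.of_le one_le_two).mul hg0).neg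
  -- the pointwise divergence identity
  have hkey : ∀ x, (∑ i : Fin 2, fderiv ℝ (f i) x (Pi.single i 1)) = (jacobian w x).det := by
    intro x
    have hw' : DifferentiableAt ℝ w x := (hw.differentiable two_ne_zero) x
    have hjac : ∀ i j : Fin 2,
        jacobian w x i j = fderiv ℝ (fun y => w y i) x (Pi.single j 1) := by
      intro i j
      have h1 : fderiv ℝ (fun y => w y i) x
          = (ContinuousLinearMap.proj i : (Fin 2 → ℝ) →L[ℝ] ℝ).comp (fderiv ℝ w x) := by
        have := (((ContinuousLinearMap.proj i : (Fin 2 → ℝ) →L[ℝ] ℝ).hasFDerivAt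
          (x := w x)).comp x hw'.hasFDerivAt).fderiv
        exact this
      rw [h1]; rfl
    set H := fderiv ℝ (fderiv ℝ u1) x with hH
    have hsymm : H (Pi.single 1 1) (Pi.single 0 1) = H (Pi.single 0 1) (Pi.single 1 1) :=
      second_derivative_symmetric
        (fun y => ((hu1.differentiable two_ne_zero) y).hasFDerivAt)
        ((hDu1.differentiable one_ne_zero x).hasFDerivAt) _ _
    have hgd : ∀ c : Fin 2 → ℝ,
        fderiv ℝ (fun y => fderiv ℝ u1 y c) x = H.flip c := by
      intro c
      rw [fderiv_clm_apply (hDu1.differentiable one_ne_zero x) (differentiableAt_const c)]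
      simp [hH]
    have d0 : fderiv ℝ (f 0) x (Pi.single 0 1)
        = u0 x * H (Pi.single 0 1) (Pi.single 1 1)
          + g1 x * fderiv ℝ u0 x (Pi.single 0 1) := by
      have : f 0 = fun y => u0 y * g1 y := rfl
      rw [this, fderiv_fun_mul ((hu0.differentiable two_ne_zero) x) (hg1.differentiable one_ne_zero x)]
      rw [hg1def, hgd (Pi.single 1 1)]
      simp [mul_comm]
    have d1 : fderiv ℝ (f 1) x (Pi.single 1 1)
        = -(u0 x * H (Pi.single 1 1) (Pi.single 0 1)
          + g0 x * fderiv ℝ u0 x (Pi.single 1 1)) := by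
      have : f 1 = fun y => -(u0 y * g0 y) := rfl
      rw [this, fderiv_fun_neg]
      rw [show (fun y => u0 y * g0 y) = fun y => u0 y * g0 y from rfl]
      rw [fderiv_fun_mul ((hu0.differentiable two_ne_zero) x) (hg0.differentiable one_ne_zero x)]
      rw [hg0def, hgd (Pi.single 0 1)]
      simp [mul_comm]
    rw [Fin.sum_univ_two, d0, d1, Matrix.det_fin_two,
      hjac 0 0, hjac 0 1, hjac 1 0, hjac 1 1, hsymm]
    show _ = fderiv ℝ u0 x (Pi.single 0 1) * g1 x - fderiv ℝ u0 x (Pi.single 1 1) * g0 x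
    ring
  -- box
  set a : Fin 2 → ℝ := fun _ => -R with hadef
  set b : Fin 2 → ℝ := fun _ => R with hbdef
  have hab : a ≤ b := by
    intro i; simp only [hadef, hbdef]; linarith
  have hz : ∀ y : Fin 2 → ℝ, R ≤ ‖y‖ → w y = 0 := by
    intro y hy
    apply image_eq_zero_of_notMem_tsupport
    intro hmem
    have := hR hmem
    rw [mem_ball, dist_zero_right] at this
    linarith
  have hfz : ∀ (i : Fin 2) (y : Fin 2 → ℝ), R ≤ ‖y‖ → f i y = 0 := by
    intro i y hy
    have h0 : u0 y = 0 := by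
      rw [hu0def]; simp only []; rw [hz y hy]; rfl
    fin_cases i <;> simp [hfdef, h0]
  have hcont : Continuous fun x => ∑ i : Fin 2, fderiv ℝ (f i) x (Pi.single i 1) := by
    apply continuous_finset_sum
    intro i _
    exact (((hf i).continuous_fderiv one_ne_zero).clm_apply continuous_const)
  have hdiv := integral_divergence_of_hasFDerivAt_off_countable' (n := 1) a b hab f
      (fun i x => fderiv ℝ (f i) x) ∅ countable_empty
      (fun i => (hf i).continuous.continuousOn)
      (fun x _ i => ((hf i).differentiable one_ne_zero x).hasFDerivAt)
      (hcont.continuousOn.integrableOn_compact isCompact_Icc)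
  have hnorm : ∀ (i : Fin 2) (c : ℝ) (x : Fin 1 → ℝ), |c| ≤ ‖(i.insertNth c x : Fin 2 → ℝ)‖ := by
    intro i c x
    have := norm_le_pi_norm (i.insertNth c x : Fin 2 → ℝ) i
    simpa using this
  have hRHS : ∑ i : Fin 2,
      ((∫ x in Icc (a ∘ i.succAbove) (b ∘ i.succAbove), f i (i.insertNth (b i) x)) -
       ∫ x in Icc (a ∘ i.succAbove) (b ∘ i.succAbove), f i (i.insertNth (a i) x)) = 0 := by
    apply Finset.sum_eq_zero
    intro i _
    have h1 : ∀ x : Fin 1 → ℝ, f i (i.insertNth (b i) x) = 0 := by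
      intro x
      refine hfz i _ (le_trans ?_ (hnorm i (b i) x))
      simp only [hbdef]; rw [abs_of_pos hR0]
    have h2 : ∀ x : Fin 1 → ℝ, f i (i.insertNth (a i) x) = 0 := by
      intro x
      refine hfz i _ (le_trans ?_ (hnorm i (a i) x))
      simp only [hadef]; rw [abs_neg, abs_of_pos hR0]
    simp [h1, h2]
  rw [hRHS] at hdiv
  simp only [hkey] at hdiv
  -- extend from the box to the whole space
  have hdet0 : ∀ x, x ∉ Icc a b → (jacobian w x).det = 0 := by
    intro x hx
    have hxR : R ≤ ‖x‖ := by
      by_contra h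
      push_neg at h
      apply hx
      rw [Set.mem_Icc]
      constructor <;> intro i <;>
        [skip; skip] <;>
      · have hi : |x i| ≤ ‖x‖ := by simpa using norm_le_pi_norm x i
        simp only [hadef, hbdef]
        rcases abs_le.mp (le_of_lt (lt_of_le_of_lt hi h)) with ⟨h1, h2⟩
        linarith
    have hts : x ∉ tsupport w := by
      intro hmem
      have := hR hmem
      rw [mem_ball, dist_zero_right] at this
      linarith
    have hfd : fderiv ℝ w x = 0 := by
      by_contra h
      exact hts (support_fderiv_subset ℝ (by simpa [Function.mem_support] using h))
    simp [jacobian, Matrix.det_fin_two, hfd]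
  rw [← setIntegral_eq_integral_of_forall_compl_eq_zero hdet0]
  exact hdiv


set_option maxHeartbeats 1000000 in
/-- The determinant is a null Lagrangian: the Jacobian determinant of a `C¹`
compactly supported map `v : ℝ² → ℝ²` integrates to zero. -/
theorem stmt6 (v : (Fin 2 → ℝ) → (Fin 2 → ℝ))
    (hv : ContDiff ℝ 1 v) (hsupp : HasCompactSupport v) :
    ∫ x : Fin 2 → ℝ, (jacobian v x).det = 0 := by
  have hvloc : LocallyIntegrable v volume := hv.continuous.locallyIntegrable
  obtain ⟨C, hC⟩ := (hsupp.fderiv (𝕜 := ℝ)).exists_bound_of_continuous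
    (hv.continuous_fderiv one_ne_zero)
  have hC0 : 0 ≤ C := le_trans (norm_nonneg _) (hC 0)
  -- mollifier family
  set φ : ℕ → ContDiffBump (0 : Fin 2 → ℝ) := fun k =>
    ⟨((k : ℝ) + 1)⁻¹ / 2, ((k : ℝ) + 1)⁻¹, by positivity, by
      have : (0:ℝ) < ((k : ℝ) + 1)⁻¹ := by positivity
      linarith⟩ with hφdef
  set L : ℝ →L[ℝ] (Fin 2 → ℝ) →L[ℝ] (Fin 2 → ℝ) := ContinuousLinearMap.lsmul ℝ ℝ with hLdef
  set w : ℕ → (Fin 2 → ℝ) → (Fin 2 → ℝ) :=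
    fun k => (φ k).normed volume ⋆[L, volume] v with hwdef
  set g : ℕ → (Fin 2 → ℝ) → ((Fin 2 → ℝ) →L[ℝ] (Fin 2 → ℝ)) :=
    fun k => (φ k).normed volume ⋆[ContinuousLinearMap.lsmul ℝ ℝ, volume] (fderiv ℝ v)
    with hgdef
  have hLprecompR : L.precompR (Fin 2 → ℝ) = ContinuousLinearMap.lsmul ℝ ℝ := by
    ext c M x
    simp [ContinuousLinearMap.precompR, hLdef]
  have hwderiv : ∀ k x, HasFDerivAt (w k) (g k x) x := by
    intro k x
    have h := HasCompactSupport.hasFDerivAt_convolution_right L hsupp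
      (((φ k).integrable_normed (μ := volume)).locallyIntegrable) hv x
    rwa [hLprecompR] at h
  have hwC2 : ∀ k, ContDiff ℝ 2 (w k) := fun k => by
    exact HasCompactSupport.contDiff_convolution_left L
      (φ k).hasCompactSupport_normed ((φ k).contDiff_normed (n := 2)) hvloc
  have hwsupp : ∀ k, HasCompactSupport (w k) := fun k => by
    exact HasCompactSupport.convolution (L := L) (μ := volume)
      (φ k).hasCompactSupport_normed hsupp
  -- pointwise convergence of derivatives
  have hrOut : Tendsto (fun k => (φ k).rOut) atTop (𝓝 0) := by
    simp only [hφdef]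
    have := tendsto_one_div_add_atTop_nhds_zero_nat (𝕜 := ℝ)
    simpa [one_div] using this
  have hgtend : ∀ x, Tendsto (fun k => g k x) atTop (𝓝 (fderiv ℝ v x)) := fun x =>
    ContDiffBump.convolution_tendsto_right_of_continuous hrOut
      (hv.continuous_fderiv one_ne_zero) x
  -- determinant formulas
  have hdetw : ∀ k x, (jacobian (w k) x).det =
      g k x (Pi.single 0 1) 0 * g k x (Pi.single 1 1) 1 -
        g k x (Pi.single 1 1) 0 * g k x (Pi.single 0 1) 1 := by
    intro k x
    have hfd : fderiv ℝ (w k) x = g k x := (hwderiv k x).fderiv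
    rw [Matrix.det_fin_two]
    simp [jacobian, hfd]
  have hdetv : ∀ x, (jacobian v x).det =
      fderiv ℝ v x (Pi.single 0 1) 0 * fderiv ℝ v x (Pi.single 1 1) 1 -
        fderiv ℝ v x (Pi.single 1 1) 0 * fderiv ℝ v x (Pi.single 0 1) 1 := by
    intro x
    rw [Matrix.det_fin_two]
    simp [jacobian]
  -- entrywise convergence
  have hent : ∀ x (i j : Fin 2), Tendsto (fun k => g k x (Pi.single j 1) i) atTop
      (𝓝 (fderiv ℝ v x (Pi.single j 1) i)) := by
    intro x i j
    have hcontev : Continuous fun M : (Fin 2 → ℝ) →L[ℝ] (Fin 2 → ℝ) =>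
        M (Pi.single j 1) i :=
      (continuous_apply i).comp (ContinuousLinearMap.apply ℝ (Fin 2 → ℝ)
        (Pi.single j 1)).continuous
    exact (hcontev.tendsto _).comp (hgtend x)
  have hFtend : ∀ x, Tendsto (fun k => (jacobian (w k) x).det) atTop
      (𝓝 ((jacobian v x).det)) := by
    intro x
    rw [hdetv x]
    simp only [hdetw]
    exact ((hent x 0 0).mul (hent x 1 1)).sub ((hent x 0 1).mul (hent x 1 0))
  -- uniform bound
  have hgbound : ∀ k x, ‖g k x‖ ≤ C := by
    intro k x
    rw [hgdef]
    simp only []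
    rw [convolution_def]
    refine (norm_integral_le_of_norm_le (((φ k).integrable_normed).mul_const C)
      (ae_of_all _ fun t => ?_)).trans ?_
    · rw [ContinuousLinearMap.lsmul_apply, norm_smul, Real.norm_eq_abs,
        abs_of_nonneg ((φ k).nonneg_normed t)]
      exact mul_le_mul_of_nonneg_left (hC _) ((φ k).nonneg_normed t)
    · rw [integral_mul_const, (φ k).integral_normed, one_mul]
  -- support control
  set K : Set (Fin 2 → ℝ) := closedBall (0 : Fin 2 → ℝ) 1 + tsupport v with hKdef
  have hK : IsCompact K := (isCompact_closedBall _ _).add hsupp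
  have hgz : ∀ k x, x ∉ K → g k x = 0 := by
    intro k x hx
    have hsub : Function.support (g k) ⊆ K := by
      refine (support_convolution_subset (ContinuousLinearMap.lsmul ℝ ℝ)).trans (Set.add_subset_add ?_ ?_)
      · rw [(φ k).support_normed_eq]
        refine (ball_subset_closedBall).trans (closedBall_subset_closedBall ?_)
        simp only [hφdef]
        rw [inv_le_one_iff₀]
        right; linarith [Nat.cast_nonneg (α := ℝ) k]
      · exact (support_fderiv_subset ℝ).trans le_rfl
    exact Function.notMem_support.mp fun h => hx (hsub h)
  -- dominated convergence
  have hentb : ∀ k x (i j : Fin 2), |g k x (Pi.single j 1) i| ≤ C := by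
    intro k x i j
    calc |g k x (Pi.single j 1) i| ≤ ‖g k x (Pi.single j 1)‖ := by
          simpa using norm_le_pi_norm (g k x (Pi.single j 1)) i
    _ ≤ ‖g k x‖ * ‖(Pi.single j 1 : Fin 2 → ℝ)‖ := (g k x).le_opNorm _
    _ = ‖g k x‖ := by rw [Pi.norm_single]; norm_num
    _ ≤ C := hgbound k x
  have hFbound : ∀ k, ∀ᵐ x, ‖(jacobian (w k) x).det‖ ≤
      K.indicator (fun _ => C * C + C * C) x := by
    intro k
    refine ae_of_all _ fun x => ?_
    by_cases hx : x ∈ K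
    · rw [Set.indicator_of_mem hx, hdetw, Real.norm_eq_abs]
      refine (abs_sub _ _).trans (add_le_add ?_ ?_) <;>
        rw [abs_mul] <;>
        exact mul_le_mul (hentb k x _ _) (hentb k x _ _) (abs_nonneg _) hC0
    · rw [Set.indicator_of_notMem hx, hdetw, hgz k x hx]
      simp
  have hbint : Integrable (K.indicator fun _ => C * C + C * C) volume :=
    (integrable_indicator_iff hK.measurableSet).mpr
      (integrableOn_const hK.measure_lt_top.ne)
  have hgcont : ∀ k, Continuous (g k) := fun k =>
    HasCompactSupport.continuous_convolution_right _ (hsupp.fderiv (𝕜 := ℝ))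
      (((φ k).integrable_normed (μ := volume)).locallyIntegrable) (hv.continuous_fderiv one_ne_zero)
  have hmeas : ∀ k, AEStronglyMeasurable (fun x => (jacobian (w k) x).det) volume := by
    intro k
    have : Continuous fun x => (jacobian (w k) x).det := by
      simp only [hdetw]
      have hc : ∀ (i j : Fin 2), Continuous fun x => g k x (Pi.single j 1) i := by
        intro i j
        exact ((continuous_apply i).comp (ContinuousLinearMap.apply ℝ (Fin 2 → ℝ)
          (Pi.single j 1)).continuous).comp (hgcont k)
      exact ((hc 0 0).mul (hc 1 1)).sub ((hc 0 1).mul (hc 1 0))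
    exact this.aestronglyMeasurable
  have hlim := tendsto_integral_of_dominated_convergence _ hmeas hbint hFbound
    (ae_of_all _ hFtend)
  have h0 : (fun k => ∫ x, (jacobian (w k) x).det) = fun _ => (0 : ℝ) :=
    funext fun k => key (w k) (hwC2 k) (hwsupp k)
  rw [h0] at hlim
  exact (tendsto_nhds_unique hlim tendsto_const_nhds)
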